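/- Let R be a commutative ring and g ≥ 0. There is an R-linear bijection of R^{2g+1} carrying the form λ_{2g+1} of X^{#2g+1} to the alternating form that restricts to the standard symplectic form λ_{H^{⊕g}} on the first 2g coordinates and pairs the last coordinate trivially with everything, and carrying the boundary map ∂_{2g+1} to the projection onto the last coordinate. In other words, X^{#2g+1} is isomorphic as a formed space with boundary to (R^{2g} ⊕ R, λ_{H^{⊕g}} ⊕ 0, pr_R). -/

import Mathlib

/-- The bilinear form of the formed space with boundary `X^{#n}`. -/
def lamX (R : Type) [CommRing R] (n : ℕ) (x y : Fin n → R) : R :=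
  ∑ i : Fin n, ∑ j : Fin n, (if (i : ℕ) < (j : ℕ) then x i * y j
    else if (j : ℕ) < (i : ℕ) then -(x i * y j) else 0)

/-- The boundary map of `X^{#n}`. -/
def bdX (R : Type) [CommRing R] (n : ℕ) (x : Fin n → R) : R := ∑ i, x i

/-- The standard symplectic form on `R^n` (interleaved hyperbolic pairs), i.e. the form of the
hyperbolic formed space `H^{⊕ g}` when `n = 2g`. -/
def omegaH (R : Type) [CommRing R] (n : ℕ) (x y : Fin n → R) : R :=
  ∑ i : Fin n, ∑ j : Fin n, (if (i : ℕ) % 2 = 0 ∧ (j : ℕ) = (i : ℕ) + 1 then x i * y j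
    else if (j : ℕ) % 2 = 0 ∧ (i : ℕ) = (j : ℕ) + 1 then -(x i * y j) else 0)


namespace XoddAux

open Finset

variable {R : Type} [CommRing R]

/-- Extend a `Fin n`-indexed family by zero to all of `ℕ`. -/
def ext (n : ℕ) (x : Fin n → R) : ℕ → R := fun j => if h : j < n then x ⟨j, h⟩ else 0

lemma ext_coe {n : ℕ} (x : Fin n → R) (i : Fin n) : ext n x (i : ℕ) = x i := by
  simp [ext, i.isLt]

lemma ext_add {n : ℕ} (x y : Fin n → R) (j : ℕ) :
    ext n (x + y) j = ext n x j + ext n y j := by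
  unfold ext; split <;> simp

lemma ext_smul {n : ℕ} (c : R) (x : Fin n → R) (j : ℕ) :
    ext n (c • x) j = c * ext n x j := by
  unfold ext; split <;> simp

lemma pairSum (h : ℕ → R) (n : ℕ) :
    ∑ j ∈ range (2 * n), h j = ∑ k ∈ range n, (h (2 * k) + h (2 * k + 1)) := by
  induction n with
  | zero => simp
  | succ n ih =>
    rw [show 2 * (n + 1) = (2 * n + 1) + 1 by ring, sum_range_succ, sum_range_succ, ih,
      sum_range_succ]
    ring

lemma trunc (w : ℕ → R) {b N : ℕ} (hb : b ≤ N) :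
    ∑ j ∈ range N, (if j < b then w j else 0) = ∑ j ∈ range b, w j := by
  have h1 : ∑ j ∈ range b, (if j < b then w j else 0)
      = ∑ j ∈ range N, (if j < b then w j else 0) :=
    Finset.sum_subset (Finset.range_subset_range.2 hb)
      (fun j _ hj => if_neg (by simpa [mem_range] using hj))
  rw [← h1]
  exact sum_congr rfl fun j hj => if_pos (mem_range.1 hj)

lemma single (w : ℕ → R) (c N : ℕ) :
    ∑ j ∈ range N, (if j = c then w j else 0) = if c < N then w c else 0 := by
  rw [Finset.sum_ite_eq' (range N) c w]
  simp [Finset.mem_range]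

lemma splitSum (w : ℕ → R) {c N : ℕ} (hc : c < N) :
    ∑ j ∈ range N, (if c < j then w j else 0)
      = (∑ j ∈ range N, w j) - (∑ j ∈ range c, w j) - w c := by
  have h2 : ∑ j ∈ range N, w j
      = (∑ j ∈ range N, (if j < c then w j else 0))
        + (∑ j ∈ range N, (if j = c then w j else 0))
        + ∑ j ∈ range N, (if c < j then w j else 0) := by
    rw [← Finset.sum_add_distrib, ← Finset.sum_add_distrib]
    exact sum_congr rfl fun j _ => by split_ifs <;> first | omega | ring
  rw [h2, trunc w hc.le, single]
  rw [if_pos hc]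
  ring

lemma sum2_eq {n : ℕ} (f : ℕ → ℕ → R) :
    (∑ i : Fin n, ∑ j : Fin n, f i j) = ∑ i ∈ range n, ∑ j ∈ range n, f i j := by
  rw [← Fin.sum_univ_eq_sum_range (fun i => ∑ j ∈ range n, f i j) n]
  exact sum_congr rfl fun i _ => (Fin.sum_univ_eq_sum_range (fun j => f (i : ℕ) j) n)


def Pre (w : ℕ → R) (c : ℕ) : R := ∑ j ∈ range c, w j

def Suf (N : ℕ) (w : ℕ → R) (c : ℕ) : R := ∑ j ∈ range N, if c < j then w j else 0

def fwd (g : ℕ) (x : Fin (2 * g + 1) → R) : (Fin (2 * g) → R) × R :=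
  (fun i => if (i : ℕ) % 2 = 0 then -Suf (2 * g + 1) (ext (2 * g + 1) x) i
            else ext (2 * g + 1) x ((i : ℕ) - 1) + ext (2 * g + 1) x i,
   ∑ j ∈ range (2 * g + 1), ext (2 * g + 1) x j)

def Osum (g : ℕ) (y : Fin (2 * g) → R) (c : ℕ) : R :=
  ∑ m ∈ range (2 * g), (if m % 2 = 1 ∧ m < c then ext (2 * g) y m else 0)

def bwd (g : ℕ) (p : (Fin (2 * g) → R) × R) : Fin (2 * g + 1) → R :=
  fun j => if (j : ℕ) % 2 = 0
    then ext (2 * g) p.1 (j : ℕ) - Osum g p.1 (j : ℕ) + p.2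
    else -ext (2 * g) p.1 ((j : ℕ) - 1) + ext (2 * g) p.1 (j : ℕ) + Osum g p.1 (j : ℕ) - p.2

lemma ext_addf {n : ℕ} (x y : Fin n → R) : ext n (x + y) = fun j => ext n x j + ext n y j := by
  funext j; unfold ext; split <;> simp

lemma ext_smulf {n : ℕ} (c : R) (x : Fin n → R) : ext n (c • x) = fun j => c * ext n x j := by
  funext j; unfold ext; split <;> simp

lemma Suf_add (N : ℕ) (a b : ℕ → R) (c : ℕ) :
    Suf N (fun j => a j + b j) c = Suf N a c + Suf N b c := by
  unfold Suf; rw [← sum_add_distrib]; exact sum_congr rfl fun j _ => by split_ifs <;> simp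

lemma Suf_smul (N : ℕ) (r : R) (a : ℕ → R) (c : ℕ) :
    Suf N (fun j => r * a j) c = r * Suf N a c := by
  unfold Suf; rw [Finset.mul_sum]; exact sum_congr rfl fun j _ => by split_ifs <;> simp

lemma fwd_add (g : ℕ) (x y : Fin (2 * g + 1) → R) : fwd g (x + y) = fwd g x + fwd g y := by
  unfold fwd
  refine Prod.ext ?_ ?_
  · funext i
    simp only [ext_addf, Prod.fst_add, Pi.add_apply, Suf_add]
    split_ifs <;> ring
  · simp only [ext_addf, Prod.snd_add, ← sum_add_distrib]

lemma fwd_smul (g : ℕ) (r : R) (x : Fin (2 * g + 1) → R) : fwd g (r • x) = r • fwd g x := by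
  unfold fwd
  refine Prod.ext ?_ ?_
  · funext i
    simp only [ext_smulf, Prod.smul_fst, Pi.smul_apply, Suf_smul, smul_eq_mul]
    split_ifs <;> ring
  · simp only [ext_smulf, Prod.smul_snd, smul_eq_mul, Finset.mul_sum]

lemma Osum_add (g : ℕ) (a b : Fin (2 * g) → R) (c : ℕ) :
    Osum g (a + b) c = Osum g a c + Osum g b c := by
  unfold Osum; rw [← sum_add_distrib]
  exact sum_congr rfl fun m _ => by simp only [ext_add]; split_ifs <;> simp

lemma Osum_smul (g : ℕ) (r : R) (a : Fin (2 * g) → R) (c : ℕ) :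
    Osum g (r • a) c = r * Osum g a c := by
  unfold Osum; rw [Finset.mul_sum]
  exact sum_congr rfl fun m _ => by simp only [ext_smul]; split_ifs <;> simp

lemma bwd_add (g : ℕ) (p q : (Fin (2 * g) → R) × R) : bwd g (p + q) = bwd g p + bwd g q := by
  funext j
  simp only [bwd, Prod.fst_add, Prod.snd_add, ext_addf, Osum_add, Pi.add_apply]
  split_ifs <;> ring

lemma bwd_smul (g : ℕ) (r : R) (p : (Fin (2 * g) → R) × R) : bwd g (r • p) = r • bwd g p := by
  funext j
  simp only [bwd, Prod.smul_fst, Prod.smul_snd, ext_smulf, Osum_smul, Pi.smul_apply, smul_eq_mul]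
  split_ifs <;> ring

lemma lamX_eq (n : ℕ) (x y : Fin n → R) :
    lamX R n x y = (∑ j ∈ range n, ext n y j * Pre (ext n x) j)
      - ∑ j ∈ range n, ext n x j * Pre (ext n y) j := by
  have step1 : lamX R n x y
      = ∑ i ∈ range n, ∑ j ∈ range n,
          ((if i < j then ext n x i * ext n y j else 0)
            - (if j < i then ext n x i * ext n y j else 0)) := by
    rw [← sum2_eq (fun i j => (if i < j then ext n x i * ext n y j else 0)
      - (if j < i then ext n x i * ext n y j else 0))]
    unfold lamX
    refine Finset.sum_congr rfl fun i _ => Finset.sum_congr rfl fun j _ => ?_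
    simp only [ext_coe]
    split_ifs <;> first | omega | ring
  rw [step1]
  have split : ∀ S T : ℕ → ℕ → R,
      (∑ i ∈ range n, ∑ j ∈ range n, (S i j - T i j))
        = (∑ i ∈ range n, ∑ j ∈ range n, S i j) - ∑ i ∈ range n, ∑ j ∈ range n, T i j := by
    intro S T
    rw [← Finset.sum_sub_distrib]
    exact Finset.sum_congr rfl fun i _ => Finset.sum_sub_distrib _ _
  rw [split]
  congr 1
  · rw [Finset.sum_comm]
    refine Finset.sum_congr rfl fun j hj => ?_
    have hjn : j ≤ n := (Finset.mem_range.1 hj).le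
    calc (∑ i ∈ range n, if i < j then ext n x i * ext n y j else 0)
        = ∑ i ∈ range n, (if i < j then ext n x i else 0) * ext n y j := by
          refine Finset.sum_congr rfl fun i _ => ?_
          split_ifs <;> simp
      _ = (∑ i ∈ range n, if i < j then ext n x i else 0) * ext n y j := by
          rw [Finset.sum_mul]
      _ = ext n y j * Pre (ext n x) j := by
          rw [trunc _ hjn, mul_comm]; rfl
  · refine Finset.sum_congr rfl fun i hi => ?_
    have hin : i ≤ n := (Finset.mem_range.1 hi).le
    calc (∑ j ∈ range n, if j < i then ext n x i * ext n y j else 0)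
        = ∑ j ∈ range n, ext n x i * (if j < i then ext n y j else 0) := by
          refine Finset.sum_congr rfl fun j _ => ?_
          split_ifs <;> simp
      _ = ext n x i * ∑ j ∈ range n, (if j < i then ext n y j else 0) := by
          rw [Finset.mul_sum]
      _ = ext n x i * Pre (ext n y) i := by
          rw [trunc _ hin]; rfl

lemma omegaH_eq (g : ℕ) (u v : Fin (2 * g) → R) :
    omegaH R (2 * g) u v
      = ∑ k ∈ range g,
          (ext (2 * g) u (2 * k) * ext (2 * g) v (2 * k + 1)
            - ext (2 * g) u (2 * k + 1) * ext (2 * g) v (2 * k)) := by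
  obtain ⟨U, hU⟩ : ∃ U, U = ext (2 * g) u := ⟨_, rfl⟩
  obtain ⟨V, hV⟩ : ∃ V, V = ext (2 * g) v := ⟨_, rfl⟩
  rw [← hU, ← hV]
  have step1 : omegaH R (2 * g) u v
      = ∑ i ∈ range (2 * g), ∑ j ∈ range (2 * g),
          ((if i % 2 = 0 ∧ j = i + 1 then U i * V j else 0)
            - (if j % 2 = 0 ∧ i = j + 1 then U i * V j else 0)) := by
    rw [← sum2_eq (fun i j => (if i % 2 = 0 ∧ j = i + 1 then U i * V j else 0)
      - (if j % 2 = 0 ∧ i = j + 1 then U i * V j else 0))]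
    unfold omegaH
    refine Finset.sum_congr rfl fun i _ => Finset.sum_congr rfl fun j _ => ?_
    simp only [hU, hV, ext_coe]
    split_ifs <;> first | omega | ring
  rw [step1]
  have step2 : ∀ i ∈ range (2 * g),
      (∑ j ∈ range (2 * g), ((if i % 2 = 0 ∧ j = i + 1 then U i * V j else 0)
        - (if j % 2 = 0 ∧ i = j + 1 then U i * V j else 0)))
      = (if i % 2 = 0 then U i * V (i + 1) else 0)
        - (if i % 2 = 1 then U i * V (i - 1) else 0) := by
    intro i hi
    have hiN : i < (2 * g) := Finset.mem_range.1 hi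
    rw [Finset.sum_sub_distrib]
    congr 1
    · have : ∀ j, (if i % 2 = 0 ∧ j = i + 1 then U i * V j else 0)
          = (if j = i + 1 then (if i % 2 = 0 then U i * V j else 0) else 0) := by
        intro j; split_ifs <;> first | omega | ring
      rw [Finset.sum_congr rfl fun j _ => this j, single]
      split_ifs with h1 h2 h2 <;> first | rfl | omega
    · have : ∀ j, (if j % 2 = 0 ∧ i = j + 1 then U i * V j else 0)
          = (if j = i - 1 then (if i % 2 = 1 then U i * V j else 0) else 0) := by
        intro j; split_ifs <;> first | omega | ring
      rw [Finset.sum_congr rfl fun j _ => this j, single]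
      split_ifs with h1 h2 h2 <;> first | rfl | omega
  rw [Finset.sum_congr rfl step2, Finset.sum_sub_distrib,
    pairSum (fun i => if i % 2 = 0 then U i * V (i + 1) else 0) g,
    pairSum (fun i => if i % 2 = 1 then U i * V (i - 1) else 0) g,
    ← Finset.sum_sub_distrib]
  refine Finset.sum_congr rfl fun k _ => ?_
  have h1 : 2 * k % 2 = 0 := by omega
  have h2 : (2 * k + 1) % 2 = 1 := by omega
  have h3 : ¬ (2 * k) % 2 = 1 := by omega
  have h4 : ¬ (2 * k + 1) % 2 = 0 := by omega
  rw [if_pos h1, if_neg h4, if_pos h2, if_neg h3]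
  have h5 : 2 * k + 1 - 1 = 2 * k := by omega
  rw [h5]
  ring

lemma ext_fwd1 (g : ℕ) (x : Fin (2 * g + 1) → R) {m : ℕ} (hm : m < 2 * g) :
    ext (2 * g) (fwd g x).1 m
      = if m % 2 = 0 then -Suf (2 * g + 1) (ext (2 * g + 1) x) m
        else ext (2 * g + 1) x (m - 1) + ext (2 * g + 1) x m := by
  have h1 : ext (2 * g) (fwd g x).1 m = (fwd g x).1 ⟨m, hm⟩ := by
    unfold ext; rw [dif_pos hm]
  rw [h1]
  rfl

lemma Suf_split (N : ℕ) (w : ℕ → R) {c : ℕ} (hc : c < N) :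
    Suf N w c = (∑ j ∈ range N, w j) - Pre w c - w c :=
  splitSum w hc

lemma Osum_pair (g : ℕ) (y : Fin (2 * g) → R) {c : ℕ} (hc : c / 2 ≤ g) :
    Osum g y c = ∑ k ∈ range (c / 2), ext (2 * g) y (2 * k + 1) := by
  unfold Osum
  rw [pairSum (fun m => if m % 2 = 1 ∧ m < c then ext (2 * g) y m else 0) g]
  have step : ∀ k, ((if (2 * k) % 2 = 1 ∧ 2 * k < c then ext (2 * g) y (2 * k) else 0)
      + (if (2 * k + 1) % 2 = 1 ∧ 2 * k + 1 < c then ext (2 * g) y (2 * k + 1) else 0))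
      = (if k < c / 2 then ext (2 * g) y (2 * k + 1) else 0) := by
    intro k; split_ifs <;> first | omega | ring
  rw [Finset.sum_congr rfl fun k _ => step k, trunc _ hc]

lemma Osum_fwd (g : ℕ) (x : Fin (2 * g + 1) → R) {c : ℕ} (hc : c ≤ 2 * g + 1) :
    Osum g (fwd g x).1 c = Pre (ext (2 * g + 1) x) (2 * (c / 2)) := by
  have hc2 : c / 2 ≤ g := by omega
  rw [Osum_pair g _ hc2]
  have step : ∀ k ∈ range (c / 2),
      ext (2 * g) (fwd g x).1 (2 * k + 1)
        = ext (2 * g + 1) x (2 * k) + ext (2 * g + 1) x (2 * k + 1) := by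
    intro k hk
    have hk' : k < c / 2 := Finset.mem_range.1 hk
    have h1 : 2 * k + 1 < 2 * g := by omega
    rw [ext_fwd1 g x h1, if_neg (by omega)]
    congr 1
  rw [Finset.sum_congr rfl step]
  unfold Pre
  rw [pairSum (ext (2 * g + 1) x) (c / 2)]

lemma bwd_fwd (g : ℕ) (x : Fin (2 * g + 1) → R) : bwd g (fwd g x) = x := by
  funext j
  have hj : (j : ℕ) < 2 * g + 1 := j.isLt
  unfold bwd
  have hsnd : (fwd g x).2 = ∑ j ∈ range (2 * g + 1), ext (2 * g + 1) x j := rfl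
  rcases Nat.even_or_odd (j : ℕ) with he | ho
  · have he' : (j : ℕ) % 2 = 0 := Nat.even_iff.1 he
    rw [if_pos he']
    have h2c : 2 * ((j : ℕ) / 2) = (j : ℕ) := by omega
    have hO : Osum g (fwd g x).1 (j : ℕ) = Pre (ext (2 * g + 1) x) (j : ℕ) := by
      rw [Osum_fwd g x hj.le, h2c]
    rcases lt_or_eq_of_le (Nat.lt_succ_iff.1 hj) with h2 | h2
    · rw [ext_fwd1 g x h2, if_pos he', hO, hsnd,
        Suf_split (2 * g + 1) (ext (2 * g + 1) x) (by omega : (j : ℕ) < 2 * g + 1),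
        ← ext_coe x j]
      unfold Pre
      ring
    · have hext0 : ext (2 * g) (fwd g x).1 (j : ℕ) = 0 := by
        unfold ext; rw [dif_neg (by omega)]
      rw [hext0, hO, hsnd, ← ext_coe x j, h2, sum_range_succ]
      unfold Pre
      ring
  · have ho' : (j : ℕ) % 2 = 1 := Nat.odd_iff.1 ho
    rw [if_neg (by omega)]
    have hlt : (j : ℕ) < 2 * g := by omega
    have hm1 : (j : ℕ) - 1 < 2 * g := by omega
    have h2c : 2 * ((j : ℕ) / 2) = (j : ℕ) - 1 := by omega
    have hO : Osum g (fwd g x).1 (j : ℕ) = Pre (ext (2 * g + 1) x) ((j : ℕ) - 1) := by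
      rw [Osum_fwd g x hj.le, h2c]
    rw [ext_fwd1 g x hm1, if_pos (by omega : ((j : ℕ) - 1) % 2 = 0),
      ext_fwd1 g x hlt, if_neg (by omega), hO, hsnd,
      Suf_split (2 * g + 1) (ext (2 * g + 1) x) (by omega : (j : ℕ) - 1 < 2 * g + 1),
      ← ext_coe x j]
    unfold Pre
    ring

lemma ext_bwd (g : ℕ) (p : (Fin (2 * g) → R) × R) {c : ℕ} (hc : c < 2 * g + 1) :
    ext (2 * g + 1) (bwd g p) c
      = if c % 2 = 0 then ext (2 * g) p.1 c - Osum g p.1 c + p.2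
        else -ext (2 * g) p.1 (c - 1) + ext (2 * g) p.1 c + Osum g p.1 c - p.2 := by
  have h1 : ext (2 * g + 1) (bwd g p) c = bwd g p ⟨c, hc⟩ := by
    unfold ext; rw [dif_pos hc]
  rw [h1]
  rfl

lemma Osum_succ_even (g : ℕ) (y : Fin (2 * g) → R) (k : ℕ) :
    Osum g y (2 * k + 1) = Osum g y (2 * k) := by
  unfold Osum
  exact Finset.sum_congr rfl fun m _ => by split_ifs <;> first | omega | rfl

lemma pairX (g : ℕ) (p : (Fin (2 * g) → R) × R) {k : ℕ} (hk : k < g) :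
    ext (2 * g + 1) (bwd g p) (2 * k) + ext (2 * g + 1) (bwd g p) (2 * k + 1)
      = ext (2 * g) p.1 (2 * k + 1) := by
  rw [ext_bwd g p (by omega : 2 * k < 2 * g + 1),
    ext_bwd g p (by omega : 2 * k + 1 < 2 * g + 1),
    if_pos (by omega : (2 * k) % 2 = 0), if_neg (by omega : ¬ (2 * k + 1) % 2 = 0),
    Osum_succ_even]
  have h1 : 2 * k + 1 - 1 = 2 * k := by omega
  rw [h1]
  ring

lemma TX (g : ℕ) (p : (Fin (2 * g) → R) × R) :
    ∑ j ∈ range (2 * g + 1), ext (2 * g + 1) (bwd g p) j = p.2 := by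
  rw [sum_range_succ, pairSum (ext (2 * g + 1) (bwd g p)) g]
  have step : ∀ k ∈ range g,
      ext (2 * g + 1) (bwd g p) (2 * k) + ext (2 * g + 1) (bwd g p) (2 * k + 1)
        = ext (2 * g) p.1 (2 * k + 1) := fun k hk => pairX g p (Finset.mem_range.1 hk)
  rw [Finset.sum_congr rfl step,
    ext_bwd g p (by omega : 2 * g < 2 * g + 1), if_pos (by omega : (2 * g) % 2 = 0)]
  have h0 : ext (2 * g) p.1 (2 * g) = 0 := by unfold ext; rw [dif_neg (by omega)]
  have hO : Osum g p.1 (2 * g) = ∑ k ∈ range g, ext (2 * g) p.1 (2 * k + 1) := by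
    have := Osum_pair g p.1 (c := 2 * g) (by omega)
    rwa [show (2 * g) / 2 = g by omega] at this
  rw [h0, hO]
  ring

lemma PreX (g : ℕ) (p : (Fin (2 * g) → R) × R) {k : ℕ} (hk : k ≤ g) :
    Pre (ext (2 * g + 1) (bwd g p)) (2 * k) = Osum g p.1 (2 * k) := by
  unfold Pre
  rw [pairSum (ext (2 * g + 1) (bwd g p)) k]
  have step : ∀ k' ∈ range k,
      ext (2 * g + 1) (bwd g p) (2 * k') + ext (2 * g + 1) (bwd g p) (2 * k' + 1)
        = ext (2 * g) p.1 (2 * k' + 1) :=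
    fun k' hk' => pairX g p (lt_of_lt_of_le (Finset.mem_range.1 hk') hk)
  rw [Finset.sum_congr rfl step]
  have := Osum_pair g p.1 (c := 2 * k) (by omega)
  rw [show (2 * k) / 2 = k by omega] at this
  rw [this]

lemma fwd_bwd (g : ℕ) (p : (Fin (2 * g) → R) × R) : fwd g (bwd g p) = p := by
  refine Prod.ext ?_ (TX g p)
  funext i
  have hi : (i : ℕ) < 2 * g := i.isLt
  show (if (i : ℕ) % 2 = 0 then -Suf (2 * g + 1) (ext (2 * g + 1) (bwd g p)) (i : ℕ)
      else ext (2 * g + 1) (bwd g p) ((i : ℕ) - 1) + ext (2 * g + 1) (bwd g p) (i : ℕ)) = p.1 i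
  rcases Nat.even_or_odd (i : ℕ) with he | ho
  · have he' : (i : ℕ) % 2 = 0 := Nat.even_iff.1 he
    rw [if_pos he']
    have hk : 2 * ((i : ℕ) / 2) = (i : ℕ) := by omega
    rw [Suf_split (2 * g + 1) _ (by omega : (i : ℕ) < 2 * g + 1), TX g p]
    have hPre : Pre (ext (2 * g + 1) (bwd g p)) (i : ℕ) = Osum g p.1 (i : ℕ) := by
      rw [← hk]; exact PreX g p (by omega)
    rw [hPre, ext_bwd g p (by omega : (i : ℕ) < 2 * g + 1), if_pos he']
    have hcoe : ext (2 * g) p.1 (i : ℕ) = p.1 i := ext_coe p.1 i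
    rw [hcoe]
    ring
  · have ho' : (i : ℕ) % 2 = 1 := Nat.odd_iff.1 ho
    rw [if_neg (by omega)]
    obtain ⟨k, hk⟩ : ∃ k, (i : ℕ) = 2 * k + 1 := ⟨(i : ℕ) / 2, by omega⟩
    have hkg : k < g := by omega
    have hcoe : ext (2 * g) p.1 (i : ℕ) = p.1 i := ext_coe p.1 i
    rw [hk] at hcoe ⊢
    rw [show 2 * k + 1 - 1 = 2 * k by omega, pairX g p hkg, hcoe]

lemma Mlem (g : ℕ) (A B : ℕ → R) :
    ∑ k ∈ range g, (A (2 * k) + A (2 * k + 1)) * Suf (2 * g + 1) B (2 * k)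
      = (∑ j ∈ range (2 * g + 1), B j * Pre A j)
        + ∑ j ∈ range (2 * g + 1), (if j % 2 = 1 then A j * B j else 0) := by
  have step1 : ∀ k, (A (2 * k) + A (2 * k + 1)) * Suf (2 * g + 1) B (2 * k)
      = ∑ j ∈ range (2 * g + 1), (if 2 * k < j then (A (2 * k) + A (2 * k + 1)) * B j else 0) := by
    intro k
    unfold Suf
    rw [Finset.mul_sum]
    exact Finset.sum_congr rfl fun j _ => by split_ifs <;> simp
  rw [Finset.sum_congr rfl fun k _ => step1 k, Finset.sum_comm]
  have step2 : ∀ j ∈ range (2 * g + 1),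
      (∑ k ∈ range g, (if 2 * k < j then (A (2 * k) + A (2 * k + 1)) * B j else 0))
        = Pre A (2 * ((j + 1) / 2)) * B j := by
    intro j hj
    have hjn : j < 2 * g + 1 := Finset.mem_range.1 hj
    have e1 : ∀ k, (if 2 * k < j then (A (2 * k) + A (2 * k + 1)) * B j else 0)
        = (if k < (j + 1) / 2 then A (2 * k) + A (2 * k + 1) else 0) * B j := by
      intro k; split_ifs <;> first | omega | ring
    rw [Finset.sum_congr rfl fun k _ => e1 k, ← Finset.sum_mul,
      trunc _ (by omega : (j + 1) / 2 ≤ g)]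
    unfold Pre
    rw [pairSum A ((j + 1) / 2)]
  rw [Finset.sum_congr rfl step2, ← Finset.sum_add_distrib]
  refine Finset.sum_congr rfl fun j hj => ?_
  have hjn : j < 2 * g + 1 := Finset.mem_range.1 hj
  rcases Nat.even_or_odd j with he | ho
  · have he' : j % 2 = 0 := Nat.even_iff.1 he
    rw [show 2 * ((j + 1) / 2) = j by omega, if_neg (by omega)]
    ring
  · have ho' : j % 2 = 1 := Nat.odd_iff.1 ho
    rw [show 2 * ((j + 1) / 2) = j + 1 by omega, if_pos ho']
    have : Pre A (j + 1) = Pre A j + A j := by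
      unfold Pre; rw [sum_range_succ]
    rw [this]
    ring

lemma form_eq (g : ℕ) (x y : Fin (2 * g + 1) → R) :
    omegaH R (2 * g) (fwd g x).1 (fwd g y).1 = lamX R (2 * g + 1) x y := by
  rw [omegaH_eq, lamX_eq]
  have step : ∀ k ∈ range g,
      (ext (2 * g) (fwd g x).1 (2 * k) * ext (2 * g) (fwd g y).1 (2 * k + 1)
        - ext (2 * g) (fwd g x).1 (2 * k + 1) * ext (2 * g) (fwd g y).1 (2 * k))
      = ((ext (2 * g + 1) x (2 * k) + ext (2 * g + 1) x (2 * k + 1))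
            * Suf (2 * g + 1) (ext (2 * g + 1) y) (2 * k)
          - (ext (2 * g + 1) y (2 * k) + ext (2 * g + 1) y (2 * k + 1))
            * Suf (2 * g + 1) (ext (2 * g + 1) x) (2 * k)) := by
    intro k hk
    have hkg : k < g := Finset.mem_range.1 hk
    rw [ext_fwd1 g x (by omega : 2 * k < 2 * g), ext_fwd1 g y (by omega : 2 * k < 2 * g),
      ext_fwd1 g x (by omega : 2 * k + 1 < 2 * g), ext_fwd1 g y (by omega : 2 * k + 1 < 2 * g)]
    simp only [if_pos (show (2 * k) % 2 = 0 by omega),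
      if_neg (show ¬ (2 * k + 1) % 2 = 0 by omega),
      show 2 * k + 1 - 1 = 2 * k by omega]
    ring
  rw [Finset.sum_congr rfl step, Finset.sum_sub_distrib,
    Mlem g (ext (2 * g + 1) x) (ext (2 * g + 1) y),
    Mlem g (ext (2 * g + 1) y) (ext (2 * g + 1) x)]
  have hD : ∑ j ∈ range (2 * g + 1),
        (if j % 2 = 1 then ext (2 * g + 1) x j * ext (2 * g + 1) y j else 0)
      = ∑ j ∈ range (2 * g + 1),
        (if j % 2 = 1 then ext (2 * g + 1) y j * ext (2 * g + 1) x j else 0) :=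
    Finset.sum_congr rfl fun j _ => by split_ifs <;> ring
  rw [hD]
  ring

lemma bd_eq (g : ℕ) (x : Fin (2 * g + 1) → R) : (fwd g x).2 = bdX R (2 * g + 1) x := by
  unfold bdX
  show ∑ j ∈ range (2 * g + 1), ext (2 * g + 1) x j = ∑ i : Fin (2 * g + 1), x i
  rw [← Fin.sum_univ_eq_sum_range (ext (2 * g + 1) x) (2 * g + 1)]
  exact Finset.sum_congr rfl fun i _ => ext_coe x i

end XoddAux

/-- `X^{#(2g+1)} ≅ (R^{2g} ⊕ R, λ_{H^{⊕g}} ⊕ 0, pr_R)` as formed spaces with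
boundary: there is a linear bijection `R^{2g+1} ≃ R^{2g} × R` carrying the form `λ_{2g+1}` of
`X^{#(2g+1)}` to the form which is the standard symplectic form on the first factor and pairs
the last coordinate trivially with everything, and carrying `∂_{2g+1}` to the projection to the
last coordinate. -/
theorem Xodd_iso
    (R : Type) [CommRing R] (g : ℕ) :
    ∃ e : (Fin (2 * g + 1) → R) ≃ₗ[R] ((Fin (2 * g) → R) × R),
      (∀ x y, omegaH R (2 * g) (e x).1 (e y).1 = lamX R (2 * g + 1) x y) ∧
      (∀ x, (e x).2 = bdX R (2 * g + 1) x) := by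
  refine ⟨{ toFun := XoddAux.fwd g
            map_add' := XoddAux.fwd_add g
            map_smul' := fun r x => by simpa using XoddAux.fwd_smul g r x
            invFun := XoddAux.bwd g
            left_inv := XoddAux.bwd_fwd g
            right_inv := XoddAux.fwd_bwd g },
    fun x y => XoddAux.form_eq g x y, fun x => XoddAux.bd_eq g x⟩
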